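/- Suppose x : ℝ → ℝⁿ is continuous and there exist positive constants λ_Q, c such that the continuous function V(t) = e(t)ᵀPe(t) + W(t), with P symmetric positive definite, W(t) ≥ 0 bounded, and e = x − x_r, is nonincreasing whenever ‖e(t)‖ ≥ 2c/λ_Q. Then e is bounded: ‖e(t)‖² ≤ max{ V(t0), λ̄_P·(2c/λ_Q)² + sup W }/λ_min(P) for all t ≥ t0, where λ_min(P) and λ̄_P are the minimum and maximum eigenvalues of P. -/

import Mathlib

open Matrix Topology Filter

theorem stmt_12 {n : ℕ} (P : Matrix (Fin n) (Fin n) ℝ)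
    (hPsymm : P.IsHermitian) (hPpd : P.PosDef)
    (x xr : ℝ → EuclideanSpace ℝ (Fin n)) (hx : Continuous x)
    (W : ℝ → ℝ) (Wsup : ℝ) (hW0 : ∀ t, 0 ≤ W t) (hWb : ∀ t, W t ≤ Wsup)
    (lamQ c : ℝ) (hlamQ : 0 < lamQ) (hc : 0 < c)
    (e : ℝ → EuclideanSpace ℝ (Fin n)) (he : ∀ t, e t = x t - xr t)
    (V : ℝ → ℝ)
    (hV : ∀ t, V t = (e t : Fin n → ℝ) ⬝ᵥ P.mulVec (e t : Fin n → ℝ) + W t)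
    (hVcont : Continuous V) (t0 : ℝ)
    (hdec : ∀ t1 t2, t0 ≤ t1 → t1 ≤ t2 →
      (∀ s ∈ Set.Icc t1 t2, 2 * c / lamQ ≤ ‖e s‖) → V t2 ≤ V t1) :
    ∀ t, t0 ≤ t →
      ‖e t‖ ^ 2 ≤
        max (V t0) ((⨆ i, hPsymm.eigenvalues i) * (2 * c / lamQ) ^ 2 + Wsup) /
          (⨅ i, hPsymm.eigenvalues i) := by
  -- trivial case n = 0
  rcases Nat.eq_zero_or_pos n with hn | hn
  · subst hn
    intro t ht
    have h1 : e t = 0 := Subsingleton.elim _ _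
    have h2 : (⨅ i : Fin 0, hPsymm.eigenvalues i) = 0 := by
      simp [iInf, Set.range_eq_empty, Real.sInf_empty]
    rw [h1, h2]
    simp
  have : Nonempty (Fin n) := ⟨⟨0, hn⟩⟩
  set lmin := ⨅ i, hPsymm.eigenvalues i with hlmin
  set lmax := ⨆ i, hPsymm.eigenvalues i with hlmax
  set b := hPsymm.eigenvectorBasis with hb
  -- inner product = dotProduct
  have hip : ∀ xv yv : EuclideanSpace ℝ (Fin n),
      (inner ℝ xv yv : ℝ) = (xv : Fin n → ℝ) ⬝ᵥ (yv : Fin n → ℝ) := by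
    intro xv yv
    simp [PiLp.inner_apply, dotProduct, RCLike.inner_apply, mul_comm]
  have hPT : Pᵀ = P := hPsymm
  -- quadratic form expansion
  have hQ : ∀ v : EuclideanSpace ℝ (Fin n),
      (v : Fin n → ℝ) ⬝ᵥ P.mulVec (v : Fin n → ℝ)
        = ∑ i, hPsymm.eigenvalues i * (inner ℝ (b i) v : ℝ) ^ 2 := by
    intro v
    have h1 := b.sum_inner_mul_inner v (WithLp.toLp 2 (P.mulVec v) : EuclideanSpace ℝ (Fin n))
    rw [show (v : Fin n → ℝ) ⬝ᵥ P.mulVec (v : Fin n → ℝ) = inner ℝ v (WithLp.toLp 2 (P.mulVec v) : EuclideanSpace ℝ (Fin n)) from (hip v (WithLp.toLp 2 (P.mulVec v))).symm, ← h1]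
    refine Finset.sum_congr rfl fun i _ => ?_
    have h2 : (inner ℝ (b i) (WithLp.toLp 2 (P.mulVec v) : EuclideanSpace ℝ (Fin n)) : ℝ)
        = hPsymm.eigenvalues i * (inner ℝ (b i) v : ℝ) := by
      rw [hip, hip]
      show (b i : Fin n → ℝ) ⬝ᵥ (P *ᵥ (v : Fin n → ℝ)) = _
      have h3 : P *ᵥ (b i : Fin n → ℝ) = hPsymm.eigenvalues i • (b i : Fin n → ℝ) :=
        hPsymm.mulVec_eigenvectorBasis i
      rw [Matrix.dotProduct_mulVec, ← Matrix.mulVec_transpose, hPT, h3,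
        smul_dotProduct]
      simp [smul_eq_mul]
    rw [h2, real_inner_comm v (b i)]
    ring
  -- norm expansion
  have hN : ∀ v : EuclideanSpace ℝ (Fin n),
      ‖v‖ ^ 2 = ∑ i, (inner ℝ (b i) v : ℝ) ^ 2 := by
    intro v
    have h1 := b.sum_inner_mul_inner v v
    rw [real_inner_self_eq_norm_sq] at h1
    rw [← h1]
    refine Finset.sum_congr rfl fun i _ => ?_
    rw [real_inner_comm v (b i)]; ring
  have hbdd : BddBelow (Set.range hPsymm.eigenvalues) := (Set.finite_range _).bddBelow
  have hbddA : BddAbove (Set.range hPsymm.eigenvalues) := (Set.finite_range _).bddAbove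
  have hminpos : 0 < lmin := by
    obtain ⟨i, hi⟩ := exists_eq_ciInf_of_finite (f := hPsymm.eigenvalues)
    rw [hlmin, ← hi]
    exact hPpd.eigenvalues_pos i
  have hminmax : lmin ≤ lmax :=
    le_trans (ciInf_le hbdd (Classical.arbitrary _)) (le_ciSup hbddA _)
  -- quadratic form bounds
  have hlow : ∀ v : EuclideanSpace ℝ (Fin n),
      lmin * ‖v‖ ^ 2 ≤ (v : Fin n → ℝ) ⬝ᵥ P.mulVec (v : Fin n → ℝ) := by
    intro v
    rw [hQ, hN, Finset.mul_sum]
    refine Finset.sum_le_sum fun i _ => ?_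
    exact mul_le_mul_of_nonneg_right (ciInf_le hbdd i) (sq_nonneg _)
  have hhigh : ∀ v : EuclideanSpace ℝ (Fin n),
      (v : Fin n → ℝ) ⬝ᵥ P.mulVec (v : Fin n → ℝ) ≤ lmax * ‖v‖ ^ 2 := by
    intro v
    rw [hQ, hN, Finset.mul_sum]
    refine Finset.sum_le_sum fun i _ => ?_
    exact mul_le_mul_of_nonneg_right (le_ciSup hbddA i) (sq_nonneg _)
  set r := 2 * c / lamQ with hr
  have hrpos : 0 < r := by positivity
  set M := max (V t0) (lmax * r ^ 2 + Wsup) with hM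
  -- if ‖e s‖ < r then V s ≤ M
  have hsmall : ∀ s, V s > M → r ≤ ‖e s‖ := by
    intro s hVs
    by_contra hlt
    push_neg at hlt
    have h1 : V s ≤ lmax * r ^ 2 + Wsup := by
      rw [hV s]
      have h2 : ‖e s‖ ^ 2 ≤ r ^ 2 :=
        pow_le_pow_left₀ (norm_nonneg _) hlt.le 2
      have := hhigh (e s)
      nlinarith [hW0 s, hWb s, lt_of_lt_of_le hminpos hminmax]
    exact absurd (h1.trans (le_max_right _ _)) (not_le.mpr hVs)
  -- main boundedness of V
  have hVbound : ∀ t, t0 ≤ t → V t ≤ M := by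
    intro t ht
    by_contra hVt
    push_neg at hVt
    set S := {s : ℝ | s ∈ Set.Icc t0 t ∧ V s ≤ M} with hS
    have hSne : S.Nonempty := ⟨t0, ⟨le_refl _, ht⟩, le_max_left _ _⟩
    have hSbdd : BddAbove S := ⟨t, fun s hs => hs.1.2⟩
    have hSclosed : IsClosed S :=
      (isClosed_Icc.inter (isClosed_le hVcont continuous_const))
    set t1 := sSup S with ht1
    have ht1mem : t1 ∈ S := hSclosed.csSup_mem hSne hSbdd
    have ht1le : t1 ≤ t := ht1mem.1.2
    have ht0t1 : t0 ≤ t1 := ht1mem.1.1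
    have ht1lt : t1 < t :=
      ht1le.lt_of_ne fun h => (not_le.mpr hVt) (h ▸ ht1mem.2)
    have hout : ∀ s ∈ Set.Ioc t1 t, r ≤ ‖e s‖ := by
      intro s hs
      refine hsmall s ?_
      by_contra hle
      push_neg at hle
      have : s ∈ S := ⟨⟨ht0t1.trans hs.1.le, hs.2⟩, hle⟩
      exact absurd (le_csSup hSbdd this) (not_le.mpr hs.1)
    have hkey : ∀ t1' ∈ Set.Ioc t1 t, V t ≤ V t1' := by
      intro t1' ht1'
      refine hdec t1' t (ht0t1.trans ht1'.1.le) ht1'.2 fun s hs => ?_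
      exact hout s ⟨lt_of_lt_of_le ht1'.1 hs.1, hs.2⟩
    have hne : (𝓝[Set.Ioc t1 t] t1).NeBot := left_nhdsWithin_Ioc_neBot ht1lt
    have htend : Filter.Tendsto V (𝓝[Set.Ioc t1 t] t1) (𝓝 (V t1)) :=
      (hVcont.tendsto t1).mono_left nhdsWithin_le_nhds
    have : V t ≤ V t1 :=
      ge_of_tendsto htend (Filter.eventually_of_mem self_mem_nhdsWithin hkey)
    exact absurd (this.trans ht1mem.2) (not_le.mpr hVt)
  -- conclude
  intro t ht
  have h1 : lmin * ‖e t‖ ^ 2 ≤ V t := by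
    rw [hV t]
    have := hlow (e t)
    linarith [hW0 t]
  have h2 := h1.trans (hVbound t ht)
  rw [le_div_iff₀ hminpos, mul_comm]
  exact h2
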